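/- arXiv:2111.00498 — 4 statements merged into one kernel-verified Lean document; each statement's English description precedes it below -/
import Mathlib

section
/- Let H = ⟨3, ℓ⟩ where ℓ = 3n+1 with n ≥ 3 odd, and set q = (n-1)/2. If α is a positive integer with ℓ/2 ≤ α < ℓ, α ≢ 0 (mod 3), α ≡ 2 (mod 3), and ℓ ∈ ⟨3, α⟩, then α = 3q+2. -/
/-- For `H = ⟨3, ℓ⟩` with `ℓ = 3n+1`, `n ≥ 3` odd, `q = (n-1)/2`:
if `0 < α`, `ℓ/2 ≤ α < ℓ`, `α ≢ 0 (mod 3)`, `α ≡ 2 (mod 3)`, and `ℓ ∈ ⟨3, α⟩`,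
then `α = 3q+2`. -/
theorem stmt_0 (n q ℓ α : ℕ) (hn : 3 ≤ n) (hodd : Odd n)
    (hℓ : ℓ = 3 * n + 1) (hq : q = (n - 1) / 2)
    (hαpos : 0 < α) (hhalf : ℓ ≤ 2 * α) (hlt : α < ℓ)
    (hmod0 : α % 3 ≠ 0) (hmod2 : α % 3 = 2)
    (hmem : ∃ x y : ℕ, ℓ = 3 * x + α * y) :
    α = 3 * q + 2 := by
  obtain ⟨x, y, h⟩ := hmem
  obtain ⟨k, hk⟩ := hodd
  obtain ⟨a, ha⟩ : ∃ a, α = 3 * a + 2 := ⟨α / 3, by omega⟩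
  subst ha
  have hylt : y < 3 := by
    by_contra hy
    push_neg at hy
    nlinarith
  obtain ⟨m, hm⟩ : ∃ m, ℓ = 3 * m + 2 * y := ⟨x + a * y, by rw [h]; ring⟩
  have hy : y = 2 := by omega
  subst hy
  omega
end

section
/- Let ℓ = 3n+2 with n ≥ 2 even and q = n/2. If α is an integer with ℓ/2 ≤ α < ℓ, α ≡ 1 (mod 3), and ℓ ∈ ⟨3, α⟩, then α = 3q+1. -/
/-- For `ℓ = 3n+2` with `n ≥ 2` even, `q = n/2`: if `ℓ/2 ≤ α < ℓ`,
`α ≡ 1 (mod 3)`, and `ℓ ∈ ⟨3, α⟩`, then `α = 3q+1`. -/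
theorem stmt_3 (n q ℓ α : ℕ) (hn : 2 ≤ n) (heven : Even n)
    (hℓ : ℓ = 3 * n + 2) (hq : q = n / 2)
    (hhalf : ℓ ≤ 2 * α) (hlt : α < ℓ) (hmod1 : α % 3 = 1)
    (hmem : ∃ x y : ℕ, ℓ = 3 * x + α * y) :
    α = 3 * q + 1 := by
  obtain ⟨m, hm⟩ := heven
  obtain ⟨x, y, h⟩ := hmem
  have hy : y ≤ 2 := by
    by_contra hy
    push_neg at hy
    have h3 : 3 * α ≤ α * y := by nlinarith
    omega
  interval_cases y <;> omega
end

section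
/- Let B = k[Y,Z]/(Y^{β+β'}, Y^{β'}Z^{γ}, Z^{γ+γ'}) with β, β', γ, γ' ≥ 1, and let y, z denote the images of Y, Z. Then the kernel of the map B² → B given by (u,v) ↦ yu + zv is generated by the columns of the matrix M₁ = [[y^{β+β'-1}, y^{β'-1}z^{γ}, 0, z], [0, 0, z^{γ+γ'-1}, -y]]. -/
set_option synthInstance.maxHeartbeats 1000000
set_option maxHeartbeats 1000000

open MvPolynomial

set_option maxHeartbeats 8000000 in
/-- Let `B = k[Y,Z]/(Y^{β+β'}, Y^{β'}Z^γ, Z^{γ+γ'})` with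
`β, β', γ, γ' ≥ 1` and let `y, z` be the images of `Y, Z`.  The kernel of
`B² → B`, `(u,v) ↦ yu + zv`, is generated by the columns of
`M₁ = [[y^{β+β'-1}, y^{β'-1}z^γ, 0, z], [0, 0, z^{γ+γ'-1}, -y]]`. -/
theorem stmt_15 (k : Type*) [Field k] (β β' γ γ' : ℕ)
    (hβ : 1 ≤ β) (hβ' : 1 ≤ β') (hγ : 1 ≤ γ) (hγ' : 1 ≤ γ')
    (J : Ideal (MvPolynomial (Fin 2) k))
    (hJ : J = Ideal.span {(X 0 : MvPolynomial (Fin 2) k) ^ (β + β'),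
      (X 0) ^ β' * (X 1) ^ γ, (X 1) ^ (γ + γ')})
    (y z : MvPolynomial (Fin 2) k ⧸ J)
    (hy : y = Ideal.Quotient.mk J (X 0)) (hz : z = Ideal.Quotient.mk J (X 1)) :
    ∀ p : (MvPolynomial (Fin 2) k ⧸ J) × (MvPolynomial (Fin 2) k ⧸ J),
      y * p.1 + z * p.2 = 0 ↔
        p ∈ Submodule.span (MvPolynomial (Fin 2) k ⧸ J)
          ({(y ^ (β + β' - 1), 0), (y ^ (β' - 1) * z ^ γ, 0),
            (0, z ^ (γ + γ' - 1)), (z, -y)} :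
            Set ((MvPolynomial (Fin 2) k ⧸ J) × (MvPolynomial (Fin 2) k ⧸ J))) := by
  subst hy hz
  set π := Ideal.Quotient.mk J with hπ
  have hyβ : (π (X 0)) ^ (β + β') = 0 := by
    rw [← map_pow, Ideal.Quotient.eq_zero_iff_mem, hJ]
    exact Ideal.subset_span (by simp)
  have hmix : π (X 0 ^ β' * X 1 ^ γ) = 0 := by
    rw [Ideal.Quotient.eq_zero_iff_mem, hJ]
    exact Ideal.subset_span (by simp)
  have hzγ : (π (X 1)) ^ (γ + γ') = 0 := by
    rw [← map_pow, Ideal.Quotient.eq_zero_iff_mem, hJ]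
    exact Ideal.subset_span (by simp)
  intro p
  constructor
  · intro hp
    obtain ⟨U, hU⟩ := Ideal.Quotient.mk_surjective p.1
    obtain ⟨V, hV⟩ := Ideal.Quotient.mk_surjective p.2
    have hmem : X 0 * U + X 1 * V ∈ J := by
      rw [← Ideal.Quotient.eq_zero_iff_mem]
      rw [map_add, map_mul, map_mul, ← hπ, hU, hV]
      exact hp
    rw [hJ, Ideal.mem_span_insert] at hmem
    obtain ⟨a, w, hw, hEq⟩ := hmem
    rw [Ideal.mem_span_insert] at hw
    obtain ⟨b, w2, hw2, hEq2⟩ := hw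
    rw [Ideal.mem_span_singleton] at hw2
    obtain ⟨c, hc⟩ := hw2
    have e1 : (X 0 : MvPolynomial (Fin 2) k) ^ (β + β') = X 0 * X 0 ^ (β + β' - 1) := by
      conv_lhs => rw [show β + β' = (β + β' - 1) + 1 by omega]
      rw [pow_succ']
    have e2 : (X 0 : MvPolynomial (Fin 2) k) ^ β' = X 0 * X 0 ^ (β' - 1) := by
      conv_lhs => rw [show β' = (β' - 1) + 1 by omega]
      rw [pow_succ']
    have e3 : (X 1 : MvPolynomial (Fin 2) k) ^ (γ + γ') = X 1 * X 1 ^ (γ + γ' - 1) := by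
      conv_lhs => rw [show γ + γ' = (γ + γ' - 1) + 1 by omega]
      rw [pow_succ']
    have hbig : X 0 * U + X 1 * V
        = a * (X 0 ^ (β + β')) + (b * (X 0 ^ β' * X 1 ^ γ) + X 1 ^ (γ + γ') * c) := by
      rw [hEq, hEq2, hc]
    rw [e1, e2, e3] at hbig
    have key : X 0 * (U - a * X 0 ^ (β + β' - 1) - b * (X 0 ^ (β' - 1) * X 1 ^ γ))
        = X 1 * (X 1 ^ (γ + γ' - 1) * c - V) := by linear_combination hbig
    have hprime : Prime (X 0 : MvPolynomial (Fin 2) k) := by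
      rw [← MulEquiv.prime_iff (MvPolynomial.finSuccEquiv k 1).toRingEquiv.toMulEquiv]
      have : (MvPolynomial.finSuccEquiv k 1).toRingEquiv.toMulEquiv (X 0)
          = (Polynomial.X : Polynomial (MvPolynomial (Fin 1) k)) := finSuccEquiv_X_zero
      rw [this]
      exact Polynomial.prime_X
    have hnd : ¬ (X 0 : MvPolynomial (Fin 2) k) ∣ X 1 := by
      rw [X_dvd_X]; decide
    have hdvd : (X 0 : MvPolynomial (Fin 2) k) ∣ X 1 * (X 1 ^ (γ + γ' - 1) * c - V) :=
      ⟨_, key.symm⟩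
    obtain ⟨W, hW⟩ := (hprime.2.2 _ _ hdvd).resolve_left hnd
    have hX0 : (X 0 : MvPolynomial (Fin 2) k) ≠ 0 := X_ne_zero 0
    have hD : U - a * X 0 ^ (β + β' - 1) - b * (X 0 ^ (β' - 1) * X 1 ^ γ) = X 1 * W := by
      apply mul_left_cancel₀ hX0
      rw [key, hW]; ring
    have hU' : U = a * X 0 ^ (β + β' - 1) + b * (X 0 ^ (β' - 1) * X 1 ^ γ) + X 1 * W := by
      linear_combination hD
    have hV' : V = X 1 ^ (γ + γ' - 1) * c - X 0 * W := by
      linear_combination -hW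
    have hpeq : p = π a • (((π (X 0)) ^ (β + β' - 1), 0) :
          (MvPolynomial (Fin 2) k ⧸ J) × (MvPolynomial (Fin 2) k ⧸ J))
        + π b • (((π (X 0)) ^ (β' - 1) * (π (X 1)) ^ γ, 0) :
          (MvPolynomial (Fin 2) k ⧸ J) × (MvPolynomial (Fin 2) k ⧸ J))
        + π c • ((0, (π (X 1)) ^ (γ + γ' - 1)) :
          (MvPolynomial (Fin 2) k ⧸ J) × (MvPolynomial (Fin 2) k ⧸ J))
        + π W • ((π (X 1), -π (X 0)) :
          (MvPolynomial (Fin 2) k ⧸ J) × (MvPolynomial (Fin 2) k ⧸ J)) := by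
      apply Prod.ext
      · show p.1 = _
        rw [← hU, hU']
        simp [smul_eq_mul, map_add, map_mul, map_pow]
        ring
      · show p.2 = _
        rw [← hV, hV']
        simp [smul_eq_mul, map_sub, map_mul, map_pow]
        ring
    rw [hpeq]
    refine Submodule.add_mem _ (Submodule.add_mem _ (Submodule.add_mem _ ?_ ?_) ?_) ?_ <;>
      exact Submodule.smul_mem _ _ (Submodule.subset_span (by simp))
  · intro hp
    induction hp using Submodule.span_induction with
    | mem q hq =>
      simp only [Set.mem_insert_iff, Set.mem_singleton_iff] at hq
      rcases hq with rfl | rfl | rfl | rfl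
      · show π (X 0) * (π (X 0)) ^ (β + β' - 1) + π (X 1) * 0 = 0
        rw [mul_zero, add_zero, ← pow_succ', Nat.sub_add_cancel (by omega)]
        exact hyβ
      · show π (X 0) * ((π (X 0)) ^ (β' - 1) * (π (X 1)) ^ γ) + π (X 1) * 0 = 0
        rw [mul_zero, add_zero, ← mul_assoc, ← pow_succ', Nat.sub_add_cancel (by omega)]
        rw [← map_pow, ← map_pow, ← map_mul]
        exact hmix
      · show π (X 0) * 0 + π (X 1) * (π (X 1)) ^ (γ + γ' - 1) = 0
        rw [mul_zero, zero_add, ← pow_succ', Nat.sub_add_cancel (by omega)]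
        exact hzγ
      · show π (X 0) * π (X 1) + π (X 1) * (-π (X 0)) = 0
        ring
    | zero => simp
    | add q r _ _ h1 h2 =>
      show π (X 0) * (q + r).1 + π (X 1) * (q + r).2 = 0
      simp only [Prod.fst_add, Prod.snd_add]
      linear_combination h1 + h2
    | smul t q _ h =>
      show π (X 0) * (t • q).1 + π (X 1) * (t • q).2 = 0
      simp only [Prod.smul_fst, Prod.smul_snd, smul_eq_mul]
      linear_combination t * h
end

section
/- Let H = ⟨bα, bβ, a⟩ be a gluing where gcd(α,β) = 1, a = αℓ + βm with ℓ, m ≥ 0, b > 1, gcd(a,b) = 1, and a ∉ {α, β}. Then in the ring A = k[[X,Y,Z]]/(X^β − Y^α, Z^b − X^ℓ Y^m), if b is even and ℓ ≥ 2, the ideal I = (x, z^{b/2}) satisfies I² = xI, where x, z are the images of X, Z. -/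
set_option synthInstance.maxHeartbeats 1000000
set_option maxHeartbeats 1000000

open MvPowerSeries

/-- Let `H = ⟨bα, bβ, a⟩` be a gluing with `gcd(α,β) = 1`,
`α, β ≥ 2`, `a = αℓ + βm` (`ℓ, m ≥ 0`), `b > 1`, `gcd(a,b) = 1`,
`a ∉ {α, β}`.  In `A = k[[X,Y,Z]]/(X^β − Y^α, Z^b − X^ℓ Y^m)`, if `b` is even
and `ℓ ≥ 2`, the ideal `I = (x, z^{b/2})` satisfies `I² = xI`, where `x, z`
are the images of `X, Z`. -/
theorem stmt_16 (k : Type*) [Field k] (α β a b ℓ m : ℕ)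
    (hαβ : Nat.Coprime α β) (hα : 2 ≤ α) (hβ : 2 ≤ β)
    (ha : a = α * ℓ + β * m) (hb : 1 < b) (hab : Nat.Coprime a b)
    (haα : a ≠ α) (haβ : a ≠ β)
    (hbeven : Even b) (hℓ : 2 ≤ ℓ)
    (J : Ideal (MvPowerSeries (Fin 3) k))
    (hJ : J = Ideal.span
      {(X 0 : MvPowerSeries (Fin 3) k) ^ β - (X 1) ^ α,
       (X 2) ^ b - (X 0) ^ ℓ * (X 1) ^ m})
    (I : Ideal (MvPowerSeries (Fin 3) k ⧸ J))
    (hI : I = Ideal.span {Ideal.Quotient.mk J (X 0), (Ideal.Quotient.mk J (X 2)) ^ (b / 2)}) :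
    I ^ 2 = Ideal.span {Ideal.Quotient.mk J (X 0)} * I := by
  have hmem : (X 2 : MvPowerSeries (Fin 3) k) ^ b - (X 0) ^ ℓ * (X 1) ^ m ∈ J := by
    rw [hJ]; exact Ideal.subset_span (Set.mem_insert_of_mem _ rfl)
  set x := Ideal.Quotient.mk J (X 0) with hx
  set y := Ideal.Quotient.mk J (X 1) with hy
  set z := Ideal.Quotient.mk J (X 2) with hzdef
  have hz : z ^ b = x ^ ℓ * y ^ m := by
    have h0 := Ideal.Quotient.eq_zero_iff_mem.mpr hmem
    rw [map_sub, map_mul, map_pow, map_pow, map_pow, sub_eq_zero] at h0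
    exact h0
  obtain ⟨c, hc⟩ := hbeven
  have hb2 : b / 2 + b / 2 = b := by omega
  have hℓ1 : ℓ = (ℓ - 1) + 1 := by omega
  have hw : z ^ (b/2) * z ^ (b/2) = x * (x ^ (ℓ - 1) * y ^ m) := by
    rw [← pow_add, hb2, hz, ← mul_assoc]
    congr 1
    conv_lhs => rw [hℓ1]
    rw [pow_succ, mul_comm]
  rw [hI]
  apply le_antisymm
  · rw [pow_two, Ideal.span_mul_span', Ideal.span_le]
    rintro p ⟨u, hu, v, hv, rfl⟩
    simp only [Set.mem_insert_iff, Set.mem_singleton_iff] at hu hv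
    have hxmem : x ∈ Ideal.span {x, z ^ (b/2)} := Ideal.subset_span (Set.mem_insert _ _)
    have hwmem : z ^ (b/2) ∈ Ideal.span {x, z ^ (b/2)} :=
      Ideal.subset_span (Set.mem_insert_of_mem _ rfl)
    have hxs : x ∈ Ideal.span ({x} : Set _) := Ideal.mem_span_singleton_self x
    rcases hu with rfl | rfl <;> rcases hv with rfl | rfl
    · exact Ideal.mul_mem_mul hxs hxmem
    · exact Ideal.mul_mem_mul hxs hwmem
    · show z ^ (b/2) * x ∈ _
      rw [mul_comm (z ^ (b/2)) x]; exact Ideal.mul_mem_mul hxs hwmem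
    · show z ^ (b/2) * z ^ (b/2) ∈ _
      rw [hw]
      refine Ideal.mul_mem_mul hxs ?_
      refine Ideal.span_mono (Set.singleton_subset_iff.mpr (Set.mem_insert _ _)) ?_
      exact Ideal.mem_span_singleton.mpr
        (Dvd.dvd.mul_right (dvd_pow_self x (by omega)) _)
  · rw [pow_two]
    exact Ideal.mul_mono_left (Ideal.span_le.mpr
      (Set.singleton_subset_iff.mpr (Ideal.subset_span (Set.mem_insert _ _))))
end
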